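/- Let Δ be a metric, S_j a cluster of m points with center x*, C a set of centers, and 0 < ε ≤ 1. Let L = {p ∈ S_j : Δ(p, C) ≤ (ε/2)/m · Δ(S_j, C)}. Then Δ(L, C) ≤ (ε/(1 − ε/2)) · Δ(S_j, x*); in particular, for ε ≤ 1, Δ(L, C) ≤ 2ε · Δ(S_j, x*). -/

import Mathlib

/-- Distance from a point to its nearest center in `C`. -/
noncomputable def ptCost {X : Type*} [MetricSpace X] (p : X) (C : Finset X) : ℝ :=
  sInf ((fun c => dist p c) '' (C : Set X))

/-- Clustering cost of a multiset of points with center set `C`. -/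
noncomputable def clCost {X : Type*} [MetricSpace X] (S : Multiset X) (C : Finset X) : ℝ :=
  (S.map fun x => ptCost x C).sum

lemma ptCost_nonneg {X : Type*} [MetricSpace X] (p : X) (C : Finset X) :
    0 ≤ ptCost p C := by
  apply Real.sInf_nonneg
  rintro x ⟨c, -, rfl⟩; exact dist_nonneg

lemma exists_ptCost_eq {X : Type*} [MetricSpace X] (p : X) {C : Finset X}
    (hC : C.Nonempty) : ∃ c ∈ C, ptCost p C = dist p c := by
  have hfin : ((fun c => dist p c) '' (C : Set X)).Finite :=
    (C.finite_toSet).image _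
  have hne : ((fun c => dist p c) '' (C : Set X)).Nonempty :=
    ⟨dist p hC.choose, ⟨hC.choose, hC.choose_spec, rfl⟩⟩
  have := hne.csInf_mem hfin
  obtain ⟨c, hc, hcd⟩ := this
  exact ⟨c, hc, hcd.symm⟩

lemma ptCost_le_dist {X : Type*} [MetricSpace X] (p : X) {C : Finset X} {c : X}
    (hc : c ∈ C) : ptCost p C ≤ dist p c := by
  have hfin : ((fun c => dist p c) '' (C : Set X)).Finite :=
    (C.finite_toSet).image _
  exact csInf_le hfin.bddBelow ⟨c, hc, rfl⟩

lemma ptCost_triangle {X : Type*} [MetricSpace X] (p q : X) {C : Finset X}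
    (hC : C.Nonempty) : ptCost p C ≤ dist p q + ptCost q C := by
  obtain ⟨c, hc, hq⟩ := exists_ptCost_eq q hC
  calc ptCost p C ≤ dist p c := ptCost_le_dist p hc
    _ ≤ dist p q + dist q c := dist_triangle p q c
    _ = dist p q + ptCost q C := by rw [hq]

lemma sum_map_le {X : Type*} (s : Multiset X) (f g : X → ℝ)
    (h : ∀ x ∈ s, f x ≤ g x) : (s.map f).sum ≤ (s.map g).sum := by
  induction s using Multiset.induction with
  | empty => simp
  | cons a s ih =>
    simp only [Multiset.map_cons, Multiset.sum_cons]
    exact add_le_add (h a (Multiset.mem_cons_self a s))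
      (ih fun x hx => h x (Multiset.mem_cons_of_mem hx))

open scoped Classical in
/-- The points of `S_j` that are very cheap relative to `C` can be served by `C` at a
cost of at most `(ε/(1-ε/2))·Δ(S_j, x*) ≤ 2ε·Δ(S_j, x*)`. -/
theorem stmt_17 {X : Type*} [MetricSpace X] (Sj : Multiset X) (xstar : X)
    (C : Finset X) (hC : C.Nonempty) (ε : ℝ) (hε0 : 0 < ε) (hε1 : ε ≤ 1) :
    clCost (Sj.filter fun q =>
        ptCost q C ≤ (ε / 2) / (Multiset.card Sj : ℝ) * clCost Sj C) C ≤
      ε / (1 - ε / 2) * (Sj.map fun q => dist q xstar).sum ∧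
    clCost (Sj.filter fun q =>
        ptCost q C ≤ (ε / 2) / (Multiset.card Sj : ℝ) * clCost Sj C) C ≤
      2 * ε * (Sj.map fun q => dist q xstar).sum := by
  set m : ℝ := (Multiset.card Sj : ℝ) with hm
  set Δ : ℝ := clCost Sj C with hΔ
  set D : ℝ := (Sj.map fun q => dist q xstar).sum with hD
  set L : Multiset X := Sj.filter fun q => ptCost q C ≤ (ε / 2) / m * Δ with hL
  have hhalf : (0:ℝ) < 1 - ε / 2 := by linarith
  have hD0 : 0 ≤ D := by
    rw [hD]
    apply Multiset.sum_nonneg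
    intro x hx
    obtain ⟨q, -, rfl⟩ := Multiset.mem_map.mp hx
    exact dist_nonneg
  have key : clCost L C ≤ ε / (1 - ε / 2) * D := by
    by_cases hSj : Sj = 0
    · have : L = 0 := by simp [hL, hSj]
      rw [this]
      simp only [clCost, Multiset.map_zero, Multiset.sum_zero]
      positivity
    · have hm1 : (1:ℝ) ≤ m := by
        rw [hm]
        exact_mod_cast Nat.one_le_iff_ne_zero.mpr
          (fun h => hSj (Multiset.card_eq_zero.mp h))
      have hm0 : (0:ℝ) < m := lt_of_lt_of_le one_pos hm1
      -- Δ ≤ D + m * ptCost xstar C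
      have hΔle : Δ ≤ D + m * ptCost xstar C := by
        have := sum_map_le Sj (fun q => ptCost q C)
          (fun q => dist q xstar + ptCost xstar C)
          (fun q _ => ptCost_triangle q xstar hC)
        rw [hΔ, hD, clCost]
        calc (Sj.map fun q => ptCost q C).sum
            ≤ (Sj.map fun q => dist q xstar + ptCost xstar C).sum := this
          _ = (Sj.map fun q => dist q xstar).sum + m * ptCost xstar C := by
              rw [Multiset.sum_map_add]
              congr 1
              rw [Multiset.map_const', Multiset.sum_replicate, hm,
                nsmul_eq_mul]
      -- per-point bound
      have hpoint : ∀ p ∈ L, ptCost p C ≤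
          (ε / 2) / (1 - ε / 2) * (D / m + dist p xstar) := by
        intro p hp
        rw [hL, Multiset.mem_filter] at hp
        obtain ⟨hpS, hpc⟩ := hp
        have h1 : ptCost xstar C ≤ dist p xstar + (ε / 2) / m * Δ := by
          have := ptCost_triangle xstar p hC
          rw [dist_comm xstar p] at this
          linarith
        have h2 : Δ ≤ D + m * dist p xstar + (ε / 2) * Δ := by
          have : m * ptCost xstar C ≤ m * (dist p xstar + (ε / 2) / m * Δ) :=
            mul_le_mul_of_nonneg_left h1 hm0.le
          have hmul : m * ((ε / 2) / m * Δ) = (ε / 2) * Δ := by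
            field_simp
          nlinarith
      -- so (1 - ε/2) Δ ≤ D + m * dist p xstar
        have h3 : (1 - ε / 2) * Δ ≤ D + m * dist p xstar := by nlinarith
        calc ptCost p C ≤ (ε / 2) / m * Δ := hpc
          _ ≤ (ε / 2) / (1 - ε / 2) * (D / m + dist p xstar) := by
              have ed : D / m + dist p xstar = (D + dist p xstar * m) / m :=
                div_add' _ _ _ hm0.ne'
              rw [ed, div_div, div_div, div_mul_eq_mul_div, div_mul_div_comm,
                div_le_div_iff₀ (by positivity) (by positivity)]
              nlinarith [mul_le_mul_of_nonneg_left h3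
                (by positivity : (0:ℝ) ≤ ε * m * 2)]
      have hsum : clCost L C ≤
          (Multiset.card L : ℝ) * ((ε / 2) / (1 - ε / 2) * (D / m))
            + (ε / 2) / (1 - ε / 2) * (L.map fun q => dist q xstar).sum := by
        rw [clCost]
        calc (L.map fun q => ptCost q C).sum
            ≤ (L.map fun p => (ε / 2) / (1 - ε / 2) * (D / m)
                + (ε / 2) / (1 - ε / 2) * dist p xstar).sum := by
              apply sum_map_le
              intro p hp
              have := hpoint p hp
              rw [mul_add] at this
              exact this
          _ = (Multiset.card L : ℝ) * ((ε / 2) / (1 - ε / 2) * (D / m))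
                + (ε / 2) / (1 - ε / 2) * (L.map fun q => dist q xstar).sum := by
              rw [Multiset.sum_map_add]
              congr 1
              · rw [Multiset.map_const', Multiset.sum_replicate, nsmul_eq_mul]
              · rw [← Multiset.sum_map_mul_left]
      have hcard : (Multiset.card L : ℝ) ≤ m := by
        rw [hm, hL]
        exact_mod_cast Multiset.card_le_card (Multiset.filter_le _ _)
      have hLD : (L.map fun q => dist q xstar).sum ≤ D := by
        rw [hD, ← Multiset.filter_add_not
          (fun q => ptCost q C ≤ (ε / 2) / m * Δ) Sj, Multiset.map_add,
          Multiset.sum_add, ← hL]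
        have : 0 ≤ ((Sj.filter fun q => ¬ (ptCost q C ≤ (ε / 2) / m * Δ)).map
            fun q => dist q xstar).sum := by
          apply Multiset.sum_nonneg
          intro x hx
          obtain ⟨q, -, rfl⟩ := Multiset.mem_map.mp hx
          exact dist_nonneg
        linarith
      have hc0 : (0:ℝ) ≤ (ε / 2) / (1 - ε / 2) := by positivity
      have step1 : (Multiset.card L : ℝ) * ((ε / 2) / (1 - ε / 2) * (D / m))
          ≤ (ε / 2) / (1 - ε / 2) * D := by
        have hDm : 0 ≤ D / m := by positivity
        have : (Multiset.card L : ℝ) * (D / m) ≤ m * (D / m) :=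
          mul_le_mul_of_nonneg_right hcard hDm
        have hmDm : m * (D / m) = D := by field_simp
        calc (Multiset.card L : ℝ) * ((ε / 2) / (1 - ε / 2) * (D / m))
            = (ε / 2) / (1 - ε / 2) * ((Multiset.card L : ℝ) * (D / m)) := by ring
          _ ≤ (ε / 2) / (1 - ε / 2) * (m * (D / m)) :=
              mul_le_mul_of_nonneg_left this hc0
          _ = (ε / 2) / (1 - ε / 2) * D := by rw [hmDm]
      have step2 : (ε / 2) / (1 - ε / 2) * (L.map fun q => dist q xstar).sum
          ≤ (ε / 2) / (1 - ε / 2) * D := mul_le_mul_of_nonneg_left hLD hc0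
      have final : (ε / 2) / (1 - ε / 2) * D + (ε / 2) / (1 - ε / 2) * D
          = ε / (1 - ε / 2) * D := by ring
      linarith
  refine ⟨key, key.trans ?_⟩
  have h2e : ε / (1 - ε / 2) ≤ 2 * ε := by
    rw [div_le_iff₀ hhalf]
    nlinarith
  exact mul_le_mul_of_nonneg_right h2e hD0
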